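/- Let ε>0, let u ∈ L²(0,∞) be continuous and let P ∈ C²([0,∞)) satisfy −εP''(x) + P'(x) = u(x) for all x>0 together with P(0)=0 and P(x) → 0, P'(x) → 0 as x → ∞. Then the identity ε²‖P''‖²_{L²(0,∞)} + ε(P'(0))² + ‖P'‖²_{L²(0,∞)} = ‖u‖²_{L²(0,∞)} holds. -/

import Mathlib

open MeasureTheory Filter Set

/-- Energy identity for the elliptic equation `-ε P'' + P' = u`
on the half-line `(0,∞)`, with `P(0) = 0` and `P, P' → 0` at `+∞`:
`ε² ‖P''‖²_{L²(0,∞)} + ε (P'(0))² + ‖P'‖²_{L²(0,∞)} = ‖u‖²_{L²(0,∞)}`. -/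
theorem elliptic_energy_identity_halfline
    (ε : ℝ) (hε : 0 < ε) (u P : ℝ → ℝ)
    (hu_cont : Continuous u)
    (huL2 : IntegrableOn (fun x => u x ^ 2) (Set.Ioi 0))
    (hP : ContDiff ℝ 2 P)
    (heq : ∀ x > (0:ℝ), -ε * deriv (deriv P) x + deriv P x = u x)
    (hP0 : P 0 = 0)
    (hPlim : Tendsto P atTop (nhds 0))
    (hP'lim : Tendsto (deriv P) atTop (nhds 0)) :
    ε ^ 2 * (∫ x in Set.Ioi (0:ℝ), (deriv (deriv P) x) ^ 2)
      + ε * (deriv P 0) ^ 2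
      + (∫ x in Set.Ioi (0:ℝ), (deriv P x) ^ 2)
      = ∫ x in Set.Ioi (0:ℝ), (u x) ^ 2 := by
  -- regularity facts
  have hP1 : ContDiff ℝ 1 (deriv P) := by
    have : ContDiff ℝ (1+1) P := by norm_num at hP ⊢; exact hP
    exact (contDiff_succ_iff_deriv.mp this).2.2
  have hd'diff : Differentiable ℝ (deriv P) := hP1.differentiable one_ne_zero
  have hd'cont : Continuous (deriv P) := hd'diff.continuous
  have hd''cont : Continuous (deriv (deriv P)) := hP1.continuous_deriv le_rfl
  -- FTC: ∫ 0..R P'' P' = (P'(R)² - P'(0)²)/2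
  have ftc : ∀ R : ℝ, ∫ x in (0:ℝ)..R, deriv (deriv P) x * deriv P x
      = (deriv P R) ^ 2 / 2 - (deriv P 0) ^ 2 / 2 := by
    intro R
    have h1 : ∀ x ∈ uIcc (0:ℝ) R,
        HasDerivAt (fun y => (deriv P y) ^ 2 / 2)
          (deriv (deriv P) x * deriv P x) x := by
      intro x _
      have h0 := (((hd'diff x).hasDerivAt).pow 2).div_const 2
      have he : (2:ℕ) * deriv P x ^ (2-1) * deriv (deriv P) x / 2
          = deriv (deriv P) x * deriv P x := by push_cast; ring
      rw [he] at h0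
      exact h0
    have h2 : IntervalIntegrable (fun x => deriv (deriv P) x * deriv P x)
        volume 0 R := (hd''cont.mul hd'cont).intervalIntegrable _ _
    exact intervalIntegral.integral_eq_sub_of_hasDerivAt h1 h2
  -- key identity on [0, R]
  have key : ∀ R : ℝ, 0 ≤ R →
      (∫ x in (0:ℝ)..R, u x ^ 2)
        = ε ^ 2 * (∫ x in (0:ℝ)..R, (deriv (deriv P) x) ^ 2)
          + (∫ x in (0:ℝ)..R, (deriv P x) ^ 2)
          + ε * (deriv P 0) ^ 2 - ε * (deriv P R) ^ 2 := by
    intro R hR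
    have hcongr : (∫ x in (0:ℝ)..R, u x ^ 2)
        = ∫ x in (0:ℝ)..R,
            (ε ^ 2 * (deriv (deriv P) x) ^ 2 + (deriv P x) ^ 2
              - 2 * ε * (deriv (deriv P) x * deriv P x)) := by
      apply intervalIntegral.integral_congr_ae
      filter_upwards with x hx
      rw [uIoc_of_le hR] at hx
      rw [← heq x hx.1]
      ring
    have i1 : IntervalIntegrable (fun x => ε ^ 2 * (deriv (deriv P) x) ^ 2)
        volume 0 R := (continuous_const.mul (hd''cont.pow 2)).intervalIntegrable _ _
    have i2 : IntervalIntegrable (fun x => (deriv P x) ^ 2)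
        volume 0 R := (hd'cont.pow 2).intervalIntegrable _ _
    have i3 : IntervalIntegrable (fun x => 2 * ε * (deriv (deriv P) x * deriv P x))
        volume 0 R := (continuous_const.mul (hd''cont.mul hd'cont)).intervalIntegrable _ _
    rw [hcongr, intervalIntegral.integral_sub (i1.add i2) i3,
      intervalIntegral.integral_add i1 i2,
      intervalIntegral.integral_const_mul, intervalIntegral.integral_const_mul, ftc R]
    ring
  set Iu : ℝ := ∫ x in Set.Ioi (0:ℝ), u x ^ 2 with hIu
  -- bound for partial integrals of u²
  have hUle : ∀ R : ℝ, 0 ≤ R → (∫ x in (0:ℝ)..R, u x ^ 2) ≤ Iu := by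
    intro R hR
    rw [intervalIntegral.integral_of_le hR]
    apply setIntegral_mono_set huL2
    · filter_upwards with x using sq_nonneg _
    · filter_upwards with x hx using hx.1
  have hAnn : ∀ R : ℝ, 0 ≤ R → 0 ≤ ∫ x in (0:ℝ)..R, (deriv (deriv P) x) ^ 2 := by
    intro R hR
    exact intervalIntegral.integral_nonneg hR (fun x _ => sq_nonneg _)
  have hBnn : ∀ R : ℝ, 0 ≤ R → 0 ≤ ∫ x in (0:ℝ)..R, (deriv P x) ^ 2 := by
    intro R hR
    exact intervalIntegral.integral_nonneg hR (fun x _ => sq_nonneg _)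
  -- eventually (deriv P R)² ≤ 1
  have hsmall : ∀ᶠ R in atTop, ε * (deriv P R) ^ 2 ≤ 1 := by
    have h : Tendsto (fun R => ε * (deriv P R) ^ 2) atTop (nhds 0) := by
      simpa using (tendsto_const_nhds.mul (hP'lim.pow 2) :
        Tendsto (fun R => ε * (deriv P R) ^ 2) atTop (nhds (ε * 0 ^ 2)))
    exact (h.eventually_le_const (by norm_num : (0:ℝ) < 1))
  have hev : ∀ᶠ R in atTop, (0:ℝ) ≤ R := eventually_ge_atTop 0
  -- integrability of P''² on Ioi 0
  have hnorm1 : ∀ R : ℝ, (∫ x in (0:ℝ)..R, ‖(deriv (deriv P) x) ^ 2‖)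
      = ∫ x in (0:ℝ)..R, (deriv (deriv P) x) ^ 2 := by
    intro R
    apply intervalIntegral.integral_congr
    intro x _
    simp only [Real.norm_eq_abs]
    exact abs_of_nonneg (sq_nonneg _)
  have hnorm2 : ∀ R : ℝ, (∫ x in (0:ℝ)..R, ‖(deriv P x) ^ 2‖)
      = ∫ x in (0:ℝ)..R, (deriv P x) ^ 2 := by
    intro R
    apply intervalIntegral.integral_congr
    intro x _
    simp only [Real.norm_eq_abs]
    exact abs_of_nonneg (sq_nonneg _)
  have hIA : IntegrableOn (fun x => (deriv (deriv P) x) ^ 2) (Set.Ioi 0) := by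
    apply integrableOn_Ioi_of_intervalIntegral_norm_bounded
      ((Iu + 1 + ε * (deriv P 0) ^ 2) / ε ^ 2) 0
      (fun R : ℝ => ((hd''cont.pow 2).integrableOn_Ioc)) tendsto_id
    filter_upwards [hsmall, hev] with R h1 hR
    simp only [id_eq]
    simp only [Pi.pow_apply]; rw [hnorm1 R]
    have hk := key R hR
    have hB := hBnn R hR
    have hU := hUle R hR
    have hε2 : (0:ℝ) < ε ^ 2 := by positivity
    rw [le_div_iff₀ hε2]
    nlinarith [mul_nonneg hε.le (sq_nonneg (deriv P 0))]
  have hIB : IntegrableOn (fun x => (deriv P x) ^ 2) (Set.Ioi 0) := by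
    apply integrableOn_Ioi_of_intervalIntegral_norm_bounded
      (Iu + 1 + ε * (deriv P 0) ^ 2) 0
      (fun R : ℝ => ((hd'cont.pow 2).integrableOn_Ioc)) tendsto_id
    filter_upwards [hsmall, hev] with R h1 hR
    simp only [id_eq]
    simp only [Pi.pow_apply]; rw [hnorm2 R]
    have hk := key R hR
    have hA := hAnn R hR
    have hU := hUle R hR
    nlinarith [mul_nonneg (sq_nonneg ε) hA, mul_nonneg hε.le (sq_nonneg (deriv P 0))]
  -- limits
  have tA := intervalIntegral_tendsto_integral_Ioi 0 hIA tendsto_id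
  have tB := intervalIntegral_tendsto_integral_Ioi 0 hIB tendsto_id
  have tU := intervalIntegral_tendsto_integral_Ioi 0 huL2 tendsto_id
  have hP'sq : Tendsto (fun R => ε * (deriv P R) ^ 2) atTop (nhds 0) := by
    have : Tendsto (fun R => ε * (deriv P R) ^ 2) atTop (nhds (ε * 0 ^ 2)) :=
      tendsto_const_nhds.mul (hP'lim.pow 2)
    simpa using this
  have tRHS : Tendsto (fun R =>
      ε ^ 2 * (∫ x in (0:ℝ)..R, (deriv (deriv P) x) ^ 2)
        + (∫ x in (0:ℝ)..R, (deriv P x) ^ 2)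
        + ε * (deriv P 0) ^ 2 - ε * (deriv P R) ^ 2) atTop
      (nhds (ε ^ 2 * (∫ x in Set.Ioi (0:ℝ), (deriv (deriv P) x) ^ 2)
        + (∫ x in Set.Ioi (0:ℝ), (deriv P x) ^ 2)
        + ε * (deriv P 0) ^ 2 - 0)) :=
    (((tendsto_const_nhds.mul tA).add tB).add tendsto_const_nhds).sub hP'sq
  have tU' : Tendsto (fun R => ∫ x in (0:ℝ)..R, u x ^ 2) atTop
      (nhds (ε ^ 2 * (∫ x in Set.Ioi (0:ℝ), (deriv (deriv P) x) ^ 2)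
        + (∫ x in Set.Ioi (0:ℝ), (deriv P x) ^ 2)
        + ε * (deriv P 0) ^ 2 - 0)) := by
    apply tRHS.congr'
    filter_upwards [hev] with R hR
    exact (key R hR).symm
  have := tendsto_nhds_unique tU tU'
  rw [hIu]
  linarith [this]
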